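/- Let d ≥ 1 and let f : ℝ^d → ℝ be continuous DR-submodular on X = [0,1]^d with f(x) ≥ 0 for all x ∈ X. Then for all x, y ∈ [0,1]^d: f(y + (1 − y) ⊙ x) ≥ (1 − ‖y‖_∞) · f(x). -/

import Mathlib

open MeasureTheory Finset
open Filter Topology

noncomputable section

/-- The unit cube `[0,1]^d` in `ℝ^d` (with Euclidean structure). -/
def cube (d : ℕ) : Set (EuclideanSpace ℝ (Fin d)) :=
  {x | ∀ i, x i ∈ Set.Icc (0 : ℝ) 1}

/-- Coordinatewise (Hadamard) product on `ℝ^d`. -/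
def had {d : ℕ} (x y : EuclideanSpace ℝ (Fin d)) : EuclideanSpace ℝ (Fin d) :=
  WithLp.toLp 2 (fun i => x i * y i)

/-- The all-ones vector in `ℝ^d`. -/
def onesV (d : ℕ) : EuclideanSpace ℝ (Fin d) := WithLp.toLp 2 (fun _ => 1)

/-- `K ⊆ ℝ^d` is downward closed (relative to the nonnegative orthant): together with any
`y ∈ K` it contains every `x` with `0 ≤ x ≤ y` coordinatewise. -/
def DownwardClosed (d : ℕ) (K : Set (EuclideanSpace ℝ (Fin d))) : Prop :=
  ∀ y ∈ K, ∀ x : EuclideanSpace ℝ (Fin d), (∀ i, 0 ≤ x i) → (∀ i, x i ≤ y i) → x ∈ K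

/-- `f` is continuous DR-submodular on the unit cube `[0,1]^d`. -/
def DRSubmodularOn (d : ℕ) (f : EuclideanSpace ℝ (Fin d) → ℝ) : Prop :=
  ∀ x y : EuclideanSpace ℝ (Fin d), x ∈ cube d → y ∈ cube d → (∀ i, x i ≤ y i) →
    ∀ (j : Fin d) (z : ℝ), 0 ≤ z →
      x + z • EuclideanSpace.single j (1 : ℝ) ∈ cube d →
      y + z • EuclideanSpace.single j (1 : ℝ) ∈ cube d →
      f (y + z • EuclideanSpace.single j (1 : ℝ)) - f y ≤
        f (x + z • EuclideanSpace.single j (1 : ℝ)) - f x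

/-- Restriction of `w` to the coordinates in `s`. -/
def maskW {d : ℕ} (w : EuclideanSpace ℝ (Fin d)) (s : Finset (Fin d)) :
    EuclideanSpace ℝ (Fin d) :=
  WithLp.toLp 2 (fun i => if i ∈ s then w i else 0)

@[simp] lemma maskW_apply {d : ℕ} (w : EuclideanSpace ℝ (Fin d)) (s : Finset (Fin d))
    (i : Fin d) : maskW w s i = if i ∈ s then w i else 0 := rfl

lemma step_ineq {d : ℕ} {f : EuclideanSpace ℝ (Fin d) → ℝ} (hsub : DRSubmodularOn d f)
    (u v w : EuclideanSpace ℝ (Fin d))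
    (hu0 : ∀ i, 0 ≤ u i) (huv : ∀ i, u i ≤ v i) (hw : ∀ i, 0 ≤ w i)
    (hvw : ∀ i, v i + w i ≤ 1) :
    f (v + w) - f v ≤ f (u + w) - f u := by
  classical
  have key : ∀ s : Finset (Fin d),
      f (v + maskW w s) - f v ≤ f (u + maskW w s) - f u := by
    intro s
    induction s using Finset.induction_on with
    | empty =>
      have h0 : maskW w (∅ : Finset (Fin d)) = 0 := by
        ext i; simp [maskW]
      rw [h0, add_zero, add_zero]
      simp
    | @insert j s hj ih =>
      have hws0 : ∀ i, 0 ≤ maskW w s i := fun i => by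
        simp only [maskW_apply]; split
        · exact hw i
        · exact le_rfl
      have hwsle : ∀ i, maskW w s i ≤ w i := fun i => by
        simp only [maskW_apply]; split
        · exact le_rfl
        · exact hw i
      have heq : ∀ p : EuclideanSpace ℝ (Fin d),
          p + maskW w (insert j s) =
          (p + maskW w s) + (w j) • EuclideanSpace.single j (1 : ℝ) := by
        intro p
        ext i
        simp only [PiLp.add_apply, PiLp.smul_apply, EuclideanSpace.single_apply,
          smul_eq_mul, maskW_apply, Finset.mem_insert]
        rcases eq_or_ne i j with rfl | hij
        · simp [hj]
        · simp [hij]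
      have hmemuv : ∀ (p : EuclideanSpace ℝ (Fin d)), (∀ i, 0 ≤ p i) → (∀ i, p i ≤ v i + w i) →
          p ∈ cube d := by
        intro p h1 h2 i
        exact ⟨h1 i, le_trans (h2 i) (hvw i)⟩
      have m1 : u + maskW w s ∈ cube d := by
        apply hmemuv <;> intro i <;> simp only [PiLp.add_apply]
        · exact add_nonneg (hu0 i) (hws0 i)
        · exact add_le_add (huv i) (hwsle i)
      have m2 : v + maskW w s ∈ cube d := by
        apply hmemuv <;> intro i <;> simp only [PiLp.add_apply]
        · exact add_nonneg (le_trans (hu0 i) (huv i)) (hws0 i)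
        · exact add_le_add le_rfl (hwsle i)
      have hwsj : ∀ i, maskW w s i + w j * (if i = j then (1:ℝ) else 0) ≤ w i := by
        intro i
        rcases eq_or_ne i j with rfl | hij
        · simp [maskW, hj]
        · simp only [maskW_apply, hij, if_false, mul_zero, add_zero]
          exact hwsle i
      have m3 : (u + maskW w s) + (w j) • EuclideanSpace.single j (1:ℝ) ∈ cube d := by
        apply hmemuv <;> intro i <;>
          simp only [PiLp.add_apply, PiLp.smul_apply, EuclideanSpace.single_apply, smul_eq_mul]
        · have h5 : (0:ℝ) ≤ w j * (if i = j then (1:ℝ) else 0) :=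
            mul_nonneg (hw j) (by split <;> norm_num)
          have h6 := add_nonneg (hu0 i) (hws0 i)
          linarith
        · have h5 := hwsj i
          have h6 := huv i
          linarith
      have m4 : (v + maskW w s) + (w j) • EuclideanSpace.single j (1:ℝ) ∈ cube d := by
        apply hmemuv <;> intro i <;>
          simp only [PiLp.add_apply, PiLp.smul_apply, EuclideanSpace.single_apply, smul_eq_mul]
        · have h5 : (0:ℝ) ≤ w j * (if i = j then (1:ℝ) else 0) :=
            mul_nonneg (hw j) (by split <;> norm_num)
          have h6 := add_nonneg (le_trans (hu0 i) (huv i)) (hws0 i)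
          linarith
        · have h5 := hwsj i
          linarith
      have hle : ∀ i, (u + maskW w s) i ≤ (v + maskW w s) i := fun i => by
        simp only [PiLp.add_apply]; exact add_le_add (huv i) le_rfl
      have hstep := hsub (u + maskW w s) (v + maskW w s) m1 m2 hle j (w j) (hw j) m3 m4
      rw [heq u, heq v]
      linarith
  have huniv : maskW w (Finset.univ : Finset (Fin d)) = w := by
    ext i; simp [maskW]
  have h := key Finset.univ
  rwa [huniv] at h

/-- Lemma 6 of Zhang et al.: for a continuous DR-submodular and
nonnegative `f` on `[0,1]^d` and any `x, y ∈ [0,1]^d`,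
`f(y + (1 - y) ⊙ x) ≥ (1 - ‖y‖_∞) f(x)`. -/
theorem dr_submodular_shift_bound
    (d : ℕ) (hd : 1 ≤ d)
    (f : EuclideanSpace ℝ (Fin d) → ℝ)
    (hsub : DRSubmodularOn d f)
    (hnonneg : ∀ x ∈ cube d, 0 ≤ f x) :
    ∀ x ∈ cube d, ∀ y ∈ cube d,
      (1 - ⨆ i, |y i|) * f x ≤ f (y + had (onesV d - y) x) := by
  intro x hx y hy
  haveI : Nonempty (Fin d) := ⟨⟨0, hd⟩⟩
  have hyabs : ∀ i, |y i| = y i := fun i => abs_of_nonneg (hy i).1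
  have hbdd : BddAbove (Set.range fun i => |y i|) := Set.Finite.bddAbove (Set.finite_range _)
  set M := ⨆ i, |y i| with hMdef
  have hMy : ∀ i, y i ≤ M := fun i => (hyabs i) ▸ le_ciSup hbdd i
  have hM0 : 0 ≤ M :=
    le_trans (abs_nonneg _) (le_ciSup hbdd (Classical.arbitrary (Fin d)))
  have hM1 : M ≤ 1 := ciSup_le fun i => by rw [hyabs i]; exact (hy i).2
  set w' : EuclideanSpace ℝ (Fin d) := WithLp.toLp 2 (fun i => y i * (1 - x i)) with hw'def
  have hw'app : ∀ i, w' i = y i * (1 - x i) := fun i => by rw [hw'def]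
  have hz : y + had (onesV d - y) x = x + w' := by
    ext i
    simp only [PiLp.add_apply, PiLp.sub_apply, had, onesV, hw'def, PiLp.toLp_apply]
    ring
  rw [hz]
  have hw'0 : ∀ i, 0 ≤ w' i := fun i => by
    rw [hw'app]; exact mul_nonneg (hy i).1 (by linarith [(hx i).2])
  rcases eq_or_lt_of_le hM0 with hM | hMpos
  · -- M = 0 : y = 0, w' = 0
    have hy0 : ∀ i, y i = 0 := fun i => le_antisymm (hM ▸ hMy i) (hy i).1
    have hxw : x + w' = x := by
      ext i
      simp only [PiLp.add_apply, hw'app, hy0 i]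
      ring
    rw [hxw, ← hM]
    simpa using le_refl (f x)
  · -- main case
    set T : ℝ := 1 / M with hTdef
    have hTpos : 0 < T := by rw [hTdef]; positivity
    have hT1 : 1 ≤ T := by rw [hTdef, le_div_iff₀ hMpos]; linarith
    set g : ℝ → ℝ := fun t => f (x + t • w') with hgdef
    have hmem : ∀ t : ℝ, 0 ≤ t → t ≤ T → x + t • w' ∈ cube d := by
      intro t ht ht' i
      simp only [PiLp.add_apply, PiLp.smul_apply, smul_eq_mul, hw'app]
      constructor
      · exact add_nonneg (hx i).1
          (mul_nonneg ht (mul_nonneg (hy i).1 (by linarith [(hx i).2])))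
      · have h1 : t * y i ≤ 1 := by
          calc t * y i ≤ T * y i := mul_le_mul_of_nonneg_right ht' (hy i).1
            _ ≤ T * M := mul_le_mul_of_nonneg_left (hMy i) (le_of_lt hTpos)
            _ = 1 := by rw [hTdef]; field_simp
        nlinarith [mul_nonneg (sub_nonneg.mpr h1) (sub_nonneg.mpr (hx i).2)]
    have hgnn : ∀ t : ℝ, 0 ≤ t → t ≤ T → 0 ≤ g t := by
      intro t ht ht'
      rw [hgdef]
      exact hnonneg _ (hmem t ht ht')
    have hdec : ∀ a b h : ℝ, 0 ≤ a → a ≤ b → 0 ≤ h → b + h ≤ T →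
        g (b + h) - g b ≤ g (a + h) - g a := by
      intro a b h ha hab hh hbh
      have e1 : x + (a + h) • w' = (x + a • w') + h • w' := by
        rw [add_smul, add_assoc]
      have e2 : x + (b + h) • w' = (x + b • w') + h • w' := by
        rw [add_smul, add_assoc]
      simp only [hgdef]
      rw [e1, e2]
      apply step_ineq hsub
      · intro i
        exact ((hmem a ha (by linarith)) i).1
      · intro i
        simp only [PiLp.add_apply, PiLp.smul_apply, smul_eq_mul]
        have := hw'0 i
        nlinarith
      · intro i
        simp only [PiLp.smul_apply, smul_eq_mul]
        exact mul_nonneg hh (hw'0 i)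
      · intro i
        have hm := ((hmem (b + h) (by linarith) hbh) i).2
        simp only [PiLp.add_apply, PiLp.smul_apply, smul_eq_mul] at hm ⊢
        nlinarith [hm]
    -- numeric part
    have key : ∀ n : ℕ, ((⌊T * ((n : ℝ) + 1)⌋₊ : ℝ) - ((n : ℝ) + 1)) * f x ≤
        (⌊T * ((n : ℝ) + 1)⌋₊ : ℝ) * g 1 := by
      intro n
      set NR : ℝ := (n : ℝ) + 1 with hNR
      have hNRpos : 0 < NR := by rw [hNR]; positivity
      set K : ℕ := ⌊T * NR⌋₊ with hK
      have hKle : (K : ℝ) ≤ T * NR := Nat.floor_le (by positivity)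
      have hNK : n + 1 ≤ K := by
        rw [hK]
        apply Nat.le_floor
        push_cast
        nlinarith
      have hKR : NR ≤ (K : ℝ) := by
        have : ((n + 1 : ℕ) : ℝ) ≤ (K : ℝ) := by exact_mod_cast hNK
        push_cast at this
        linarith [this]
      set G : ℕ → ℝ := fun j => g ((j : ℝ) / NR) with hG
      set D : ℝ := G (n + 1) - G n with hDdef
      have ecast : ∀ j : ℕ, ((j : ℝ) + 1) / NR = (j : ℝ) / NR + 1 / NR := by
        intro j; ring
      have stepA : ∀ j ∈ Finset.range (n + 1), D ≤ G (j + 1) - G j := by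
        intro j hj
        rw [Finset.mem_range] at hj
        have hjn : (j : ℝ) ≤ (n : ℝ) := by exact_mod_cast Nat.lt_succ_iff.mp hj
        have h := hdec ((j : ℝ) / NR) ((n : ℝ) / NR) (1 / NR)
          (div_nonneg (Nat.cast_nonneg j) hNRpos.le)
          (by gcongr)
          (by positivity)
          (by rw [← ecast n]
              rw [show ((n : ℝ) + 1) / NR = 1 by rw [hNR]; field_simp]
              exact hT1)
        rw [hDdef]
        simp only [hG]
        push_cast
        rw [ecast j, ecast n]
        exact h
      have stepB : ∀ j ∈ Finset.Ico (n + 1) K, G (j + 1) - G j ≤ D := by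
        intro j hj
        rw [Finset.mem_Ico] at hj
        have hjn : (n : ℝ) ≤ (j : ℝ) := by
          have : n ≤ j := le_trans (Nat.le_succ n) hj.1
          exact_mod_cast this
        have hjK : (j : ℝ) + 1 ≤ (K : ℝ) := by exact_mod_cast hj.2
        have h := hdec ((n : ℝ) / NR) ((j : ℝ) / NR) (1 / NR)
          (div_nonneg (Nat.cast_nonneg n) hNRpos.le)
          (by gcongr)
          (by positivity)
          (by rw [← ecast j, div_le_iff₀ hNRpos]
              calc (j : ℝ) + 1 ≤ (K : ℝ) := hjK
                _ ≤ T * NR := hKle)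
        rw [hDdef]
        simp only [hG]
        push_cast
        rw [ecast j, ecast n]
        exact h
      have tele1 : ∑ j ∈ Finset.range (n + 1), (G (j + 1) - G j) = G (n + 1) - G 0 :=
        Finset.sum_range_sub G (n + 1)
      have b1 : ((n : ℝ) + 1) * D ≤ G (n + 1) - G 0 := by
        have hb := Finset.card_nsmul_le_sum (Finset.range (n + 1))
          (fun j => G (j + 1) - G j) D stepA
        rw [Finset.card_range, nsmul_eq_mul, tele1] at hb
        push_cast at hb
        exact hb
      have b2 : G K - G (n + 1) ≤ ((K : ℝ) - ((n : ℝ) + 1)) * D := by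
        have hb := Finset.sum_le_card_nsmul (Finset.Ico (n + 1) K)
          (fun j => G (j + 1) - G j) D stepB
        rw [Nat.card_Ico, Finset.sum_Ico_eq_sub _ hNK, Finset.sum_range_sub G,
          Finset.sum_range_sub G, nsmul_eq_mul, Nat.cast_sub hNK] at hb
        push_cast at hb
        linarith [hb]
      have hGK0 : 0 ≤ G K := by
        simp only [hG]
        apply hgnn
        · positivity
        · rw [div_le_iff₀ hNRpos]; exact hKle
      have hG0 : G 0 = f x := by
        simp only [hG, hgdef]
        norm_num
      have hGN1 : G (n + 1) = g 1 := by
        simp only [hG]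
        congr 1
        push_cast
        rw [hNR]
        field_simp
      have hKN0 : (0 : ℝ) ≤ (K : ℝ) - NR := by linarith
      rw [hG0, hGN1] at b1
      rw [hGN1] at b2
      rw [← hNR] at b1 b2
      have c1 : 0 ≤ g 1 + ((K : ℝ) - NR) * D := by linarith [b2, hGK0]
      have c2 := mul_le_mul_of_nonneg_left b1 hKN0
      have c3 := mul_nonneg hNRpos.le c1
      clear hdec stepA stepB tele1 hmem hgnn hsub hnonneg hz hw'0 hG0 hGN1 hGK0 b1 b2 hKle hKR hNK ecast hyabs hbdd hMy hw'app
      clear_value D G K NR g T M w'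
      nlinarith [c2, c3]
    -- limit part
    have hTend : Tendsto (fun n : ℕ => (⌊T * ((n : ℝ) + 1)⌋₊ : ℝ) / ((n : ℝ) + 1))
        atTop (𝓝 T) := by
      have h1 := tendsto_nat_floor_mul_div_atTop (le_of_lt hTpos) (R := ℝ)
      have h2 : Tendsto (fun n : ℕ => ((n : ℝ) + 1)) atTop atTop :=
        tendsto_atTop_add_const_right _ 1 tendsto_natCast_atTop_atTop
      exact h1.comp h2
    have hle : ∀ n : ℕ,
        ((⌊T * ((n : ℝ) + 1)⌋₊ : ℝ) / ((n : ℝ) + 1) - 1) * f x ≤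
        ((⌊T * ((n : ℝ) + 1)⌋₊ : ℝ) / ((n : ℝ) + 1)) * g 1 := by
      intro n
      have hk := key n
      have hp : (0 : ℝ) < (n : ℝ) + 1 := by positivity
      have h2 : ((⌊T * ((n : ℝ) + 1)⌋₊ : ℝ) / ((n : ℝ) + 1) - 1) * f x =
          (((⌊T * ((n : ℝ) + 1)⌋₊ : ℝ) - ((n : ℝ) + 1)) * f x) / ((n : ℝ) + 1) := by
        field_simp
      have h3 : ((⌊T * ((n : ℝ) + 1)⌋₊ : ℝ) / ((n : ℝ) + 1)) * g 1 =
          ((⌊T * ((n : ℝ) + 1)⌋₊ : ℝ) * g 1) / ((n : ℝ) + 1) := by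
        ring
      rw [h2, h3]
      exact (div_le_div_iff_of_pos_right hp).mpr hk
    have lhsTend : Tendsto (fun n : ℕ =>
        ((⌊T * ((n : ℝ) + 1)⌋₊ : ℝ) / ((n : ℝ) + 1) - 1) * f x) atTop (𝓝 ((T - 1) * f x)) :=
      (hTend.sub tendsto_const_nhds).mul_const _
    have rhsTend : Tendsto (fun n : ℕ =>
        ((⌊T * ((n : ℝ) + 1)⌋₊ : ℝ) / ((n : ℝ) + 1)) * g 1) atTop (𝓝 (T * g 1)) :=
      hTend.mul_const _
    have hlim : (T - 1) * f x ≤ T * g 1 :=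
      le_of_tendsto_of_tendsto' lhsTend rhsTend hle
    have hg1 : g 1 = f (x + w') := by
      simp only [hgdef]
      rw [one_smul]
    have hMne : M ≠ 0 := ne_of_gt hMpos
    have e1 : (1 - M) * f x = M * ((T - 1) * f x) := by
      rw [hTdef]
      field_simp
    have e2 : M * (T * g 1) = g 1 := by
      rw [hTdef]
      field_simp
    calc (1 - M) * f x = M * ((T - 1) * f x) := e1
      _ ≤ M * (T * g 1) := mul_le_mul_of_nonneg_left hlim hM0
      _ = g 1 := e2
      _ = f (x + w') := hg1
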